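/- arXiv:1903.05886 — 2 statements merged into one kernel-verified Lean document; each statement's English description precedes it below -/
import Mathlib

section
/- Let A>0, γ>1, ϱ̄ ≥ 0, p(ϱ) = Aϱ^γ and P(ϱ) = A(ϱ^γ − ϱ·ϱ̄^{γ−1})/(γ−1). For all 0 < r_min ≤ r_max < ∞ there exists a constant c₂ = c₂(A,γ,r_min,r_max) > 0 such that for every r ∈ [r_min, r_max] and every ϱ ≥ 0: |p(ϱ) − p′(r)(ϱ − r) − p(r)| ≤ c₂ (P(ϱ) − P′(r)(ϱ − r) − P(r)). -/
open Real

/-- For `A > 0`, `γ > 1`, `ϱ̄ ≥ 0`, `p(ϱ) = A ϱ^γ` and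
`P(ϱ) = A (ϱ^γ - ϱ ϱ̄^(γ-1)) / (γ-1)`: for all `0 < r_min ≤ r_max < ∞` there is a
constant `c₂ > 0` such that for every `r ∈ [r_min, r_max]` and every `ϱ ≥ 0`, the
first-order Taylor remainder of `p` at `r` is dominated by `c₂` times the (nonnegative)
first-order Taylor remainder of `P` at `r`:
`|p(ϱ) - p'(r)(ϱ - r) - p(r)| ≤ c₂ (P(ϱ) - P'(r)(ϱ - r) - P(r))`. -/
theorem stmt4 (A γ ϱbar : ℝ) (hA : 0 < A) (hγ : 1 < γ) (hϱbar : 0 ≤ ϱbar)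
    (p P : ℝ → ℝ)
    (hp : ∀ ϱ : ℝ, p ϱ = A * ϱ ^ γ)
    (hP : ∀ ϱ : ℝ, P ϱ = A * (ϱ ^ γ - ϱ * ϱbar ^ (γ - 1)) / (γ - 1)) :
    ∀ rmin rmax : ℝ, 0 < rmin → rmin ≤ rmax →
      ∃ c₂ > (0:ℝ), ∀ r ∈ Set.Icc rmin rmax, ∀ ϱ ≥ (0:ℝ),
        |p ϱ - deriv p r * (ϱ - r) - p r| ≤
          c₂ * (P ϱ - deriv P r * (ϱ - r) - P r) := by
  intro rmin rmax hrmin _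
  refine ⟨γ - 1, by linarith, ?_⟩
  intro r hr ϱ hϱ
  have hr0 : 0 < r := lt_of_lt_of_le hrmin hr.1
  have hγ0 : (0:ℝ) < γ - 1 := by linarith
  -- derivative of p
  have hdp : deriv p r = A * (γ * r ^ (γ - 1)) := by
    have h1 : HasDerivAt (fun x : ℝ => x ^ γ) (γ * r ^ (γ - 1)) r :=
      Real.hasDerivAt_rpow_const (Or.inl hr0.ne')
    have h2 : HasDerivAt p (A * (γ * r ^ (γ - 1))) r := by
      have := h1.const_mul A
      simpa [hp] using this.congr_of_eventuallyEq (by filter_upwards with x; rw [hp])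
    exact h2.deriv
  have hdP : deriv P r = A * (γ * r ^ (γ - 1) - ϱbar ^ (γ - 1)) / (γ - 1) := by
    have h1 : HasDerivAt (fun x : ℝ => x ^ γ) (γ * r ^ (γ - 1)) r :=
      Real.hasDerivAt_rpow_const (Or.inl hr0.ne')
    have h2 : HasDerivAt (fun x : ℝ => A * (x ^ γ - x * ϱbar ^ (γ - 1)) / (γ - 1))
        (A * (γ * r ^ (γ - 1) - ϱbar ^ (γ - 1)) / (γ - 1)) r := by
      have h3 : HasDerivAt (fun x : ℝ => x ^ γ - x * ϱbar ^ (γ - 1))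
          (γ * r ^ (γ - 1) - ϱbar ^ (γ - 1)) r := by
        have h5 := h1.sub ((hasDerivAt_id r).mul_const (ϱbar ^ (γ - 1)))
        rw [one_mul] at h5
        exact h5
      simpa [mul_div_assoc] using (h3.const_mul A).div_const (γ - 1)
    have h4 : HasDerivAt P (A * (γ * r ^ (γ - 1) - ϱbar ^ (γ - 1)) / (γ - 1)) r :=
      h2.congr_of_eventuallyEq (by filter_upwards with x; rw [hP])
    exact h4.deriv
  -- key convexity inequality
  have key : 0 ≤ ϱ ^ γ - γ * r ^ (γ - 1) * (ϱ - r) - r ^ γ := by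
    have hs : (-1:ℝ) ≤ ϱ / r - 1 := by
      have : 0 ≤ ϱ / r := div_nonneg hϱ hr0.le
      linarith
    have hb := one_add_mul_self_le_rpow_one_add hs hγ.le
    have h1 : (1 + (ϱ / r - 1) : ℝ) = ϱ / r := by ring
    rw [h1] at hb
    have hb2 : (1 + γ * (ϱ / r - 1)) * r ^ γ ≤ (ϱ / r) ^ γ * r ^ γ :=
      mul_le_mul_of_nonneg_right hb (Real.rpow_nonneg hr0.le γ)
    have hdiv : (ϱ / r) ^ γ * r ^ γ = ϱ ^ γ := by
      rw [Real.div_rpow hϱ hr0.le, div_mul_cancel₀]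
      exact (Real.rpow_pos_of_pos hr0 γ).ne'
    rw [hdiv] at hb2
    have hrr : r ^ (γ - 1) * r = r ^ γ := by
      rw [← Real.rpow_add_one hr0.ne']
      ring_nf
    have hexp : γ * (ϱ / r - 1) * r ^ γ = γ * r ^ (γ - 1) * (ϱ - r) := by
      have : r ^ γ = r ^ (γ - 1) * r := hrr.symm
      rw [this]
      field_simp
    nlinarith [hb2, hexp]
  have hQ : 0 ≤ A * (ϱ ^ γ - γ * r ^ (γ - 1) * (ϱ - r) - r ^ γ) :=
    mul_nonneg hA.le key
  rw [hp, hp, hdp, hP, hP, hdP]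
  rw [abs_of_nonneg (by nlinarith)]
  have : (γ - 1) * (A * (ϱ ^ γ - ϱ * ϱbar ^ (γ - 1)) / (γ - 1) -
      A * (γ * r ^ (γ - 1) - ϱbar ^ (γ - 1)) / (γ - 1) * (ϱ - r) -
      A * (r ^ γ - r * ϱbar ^ (γ - 1)) / (γ - 1)) =
      A * (ϱ ^ γ - γ * r ^ (γ - 1) * (ϱ - r) - r ^ γ) := by
    field_simp
    ring
  rw [this]
  nlinarith
end

section
/- Let Q ⊆ ℝ^d be measurable and let (z^R)_{R>0}, z^R : Q → ℝ^m measurable, generate a Young measure ν = (ν_y)_{y∈Q}, i.e. each ν_y is a probability measure on ℝ^m, y ↦ ν_y is weak-* measurable, and for every ψ ∈ L¹(Q; C₀(ℝ^m)) one has ∫_Q ψ(y, z^R(y)) dy → ∫_Q (∫_{ℝ^m} ψ(y,λ) dν_y(λ)) dy as R → ∞. Let G : ℝ^m → [0,∞) be continuous with sup_{R>0} ∫_Q G(z^R(y)) dy < ∞, and let F : ℝ^m → ℝ be continuous with |F(z)| ≤ G(z) for all z ∈ ℝ^m. Let φ ∈ C_c(Q) with φ ≥ 0, and assume the limits L_F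 = lim_{R→∞} ∫_Q F(z^R(y)) φ(y) dy and L_G = lim_{R→∞} ∫_Q G(z^R(y)) φ(y) dy exist. Then y ↦ ⟨ν_y, G⟩ = ∫_{ℝ^m} G dν_y and y ↦ ⟨ν_y, F⟩ are integrable on Q, and |L_F − ∫_Q ⟨ν_y, F⟩ φ(y) dy| ≤ L_G − ∫_Q ⟨ν_y, G⟩ φ(y) dy; in particular the right-hand side is nonnegative. -/
open MeasureTheory Filter
open scoped ZeroAtInfty

noncomputable def theta (m : ℕ) (k : ℕ) : EuclideanSpace ℝ (Fin m) → ℝ :=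
  fun v => min 1 (max 0 ((k:ℝ)+1 - ‖v‖))

lemma theta_cont (m k : ℕ) : Continuous (theta m k) := by
  unfold theta; fun_prop

lemma theta_nonneg (m k : ℕ) (v : EuclideanSpace ℝ (Fin m)) : 0 ≤ theta m k v :=
  le_min zero_le_one (le_max_left _ _)

lemma theta_le_one (m k : ℕ) (v : EuclideanSpace ℝ (Fin m)) : theta m k v ≤ 1 :=
  min_le_left _ _

lemma theta_eq_one (m k : ℕ) (v : EuclideanSpace ℝ (Fin m)) (h : ‖v‖ ≤ k) :
    theta m k v = 1 := by
  unfold theta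
  have : (1 : ℝ) ≤ (k:ℝ) + 1 - ‖v‖ := by linarith
  rw [min_eq_left (le_max_of_le_right this)]

lemma theta_mono (m : ℕ) {k l : ℕ} (h : k ≤ l) (v : EuclideanSpace ℝ (Fin m)) :
    theta m k v ≤ theta m l v := by
  unfold theta
  have : (k:ℝ) ≤ l := by exact_mod_cast h
  gcongr

lemma theta_compactSupport (m k : ℕ) : HasCompactSupport (theta m k) := by
  apply HasCompactSupport.intro (isCompact_closedBall (0 : EuclideanSpace ℝ (Fin m)) ((k:ℝ)+1))
  intro v hv
  simp only [Metric.mem_closedBall, dist_zero_right, not_le] at hv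
  unfold theta
  rw [max_eq_left (by linarith), min_eq_right (by norm_num)]

/-- `H * θ k` as an element of `C₀`. -/
noncomputable def mulTheta {m : ℕ} (H : EuclideanSpace ℝ (Fin m) → ℝ) (hH : Continuous H)
    (k : ℕ) : C₀(EuclideanSpace ℝ (Fin m), ℝ) :=
  ⟨⟨fun v => H v * theta m k v, hH.mul (theta_cont m k)⟩,
    ((theta_compactSupport m k).mul_left).is_zero_at_infty⟩

lemma mulTheta_apply {m : ℕ} (H : EuclideanSpace ℝ (Fin m) → ℝ) (hH : Continuous H)
    (k : ℕ) (v : EuclideanSpace ℝ (Fin m)) : mulTheta H hH k v = H v * theta m k v := rfl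

lemma abs_key (a g t p : ℝ) (ha : |a| ≤ g) (ht0 : 0 ≤ t) (ht1 : t ≤ 1) (hp : 0 ≤ p) :
    |a * p - p * (a * t)| ≤ g * p - p * (g * t) := by
  have h1 : a * p - p * (a*t) = (a*(1-t))*p := by ring
  have h2 : g * p - p * (g*t) = (g*(1-t))*p := by ring
  rw [h1, h2, abs_mul, abs_of_nonneg hp, abs_mul, abs_of_nonneg (by linarith : (0:ℝ) ≤ 1 - t)]
  have hg : 0 ≤ g := le_trans (abs_nonneg a) ha
  have : |a| * (1-t) ≤ g * (1-t) := mul_le_mul_of_nonneg_right ha (by linarith)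
  exact mul_le_mul_of_nonneg_right this hp

lemma integrable_mul_comm {α : Type*} [MeasurableSpace α] {μ : Measure α} {f g : α → ℝ}
    (h : Integrable (fun x => f x * g x) μ) : Integrable (fun x => g x * f x) μ :=
  h.congr (Filter.Eventually.of_forall fun x => mul_comm _ _)

lemma prod_le_of_le_one (a b g : ℝ) (ha0 : 0 ≤ a) (ha1 : a ≤ 1) (hb0 : 0 ≤ b) (hb1 : b ≤ 1)
    (hg : 0 ≤ g) : a * (g * b) ≤ g := by
  calc a * (g * b) ≤ 1 * (g * b) := mul_le_mul_of_nonneg_right ha1 (mul_nonneg hg hb0)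
    _ = g * b := one_mul _
    _ ≤ g * 1 := mul_le_mul_of_nonneg_left hb1 hg
    _ = g := mul_one _

set_option maxHeartbeats 1000000 in
/-- Let `(z^R)_{R>0}` on a measurable set `Q ⊆ ℝ^d` generate a Young
measure `(ν_y)_{y∈Q}` (each `ν_y` a probability measure on `ℝ^m`, `y ↦ ν_y` weak-*
measurable, and `∫_Q ψ(y, z^R(y)) dy → ∫_Q ⟨ν_y, ψ(y,·)⟩ dy` for all
`ψ ∈ L¹(Q; C₀(ℝ^m))`). Let `G ≥ 0` be continuous with `∫_Q G(z^R) dy` uniformly bounded,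
`F` continuous with `|F| ≤ G`, and `φ ∈ C_c(Q)`, `φ ≥ 0`. If the limits
`L_F = lim_R ∫_Q F(z^R) φ` and `L_G = lim_R ∫_Q G(z^R) φ` exist, then `⟨ν_·, G⟩` and
`⟨ν_·, F⟩` are integrable on `Q` and the concentration defect of `F` is dominated by that
of `G`: `|L_F - ∫_Q ⟨ν_y, F⟩ φ| ≤ L_G - ∫_Q ⟨ν_y, G⟩ φ`. -/
theorem stmt10 (d m : ℕ)
    (Q : Set (EuclideanSpace ℝ (Fin d))) (hQ : MeasurableSet Q)
    (z : ℝ → EuclideanSpace ℝ (Fin d) → EuclideanSpace ℝ (Fin m))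
    (hz : ∀ R > (0:ℝ), Measurable (z R))
    (ν : EuclideanSpace ℝ (Fin d) → Measure (EuclideanSpace ℝ (Fin m)))
    (hν : ∀ y, IsProbabilityMeasure (ν y))
    (hνmeas : ∀ f : C₀(EuclideanSpace ℝ (Fin m), ℝ),
      Measurable (fun y => ∫ lam, f lam ∂(ν y)))
    (hgen : ∀ Ψ : EuclideanSpace ℝ (Fin d) → C₀(EuclideanSpace ℝ (Fin m), ℝ),
      Integrable Ψ (volume.restrict Q) →
      Tendsto (fun R : ℝ => ∫ y in Q, (Ψ y) (z R y)) atTop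
        (nhds (∫ y in Q, ∫ lam, (Ψ y) lam ∂(ν y))))
    (G : EuclideanSpace ℝ (Fin m) → ℝ) (hGcont : Continuous G)
    (hGnonneg : ∀ v, 0 ≤ G v) (cG : ℝ)
    (hGbound : ∀ R > (0:ℝ),
      ∫⁻ y in Q, ENNReal.ofReal (G (z R y)) ≤ ENNReal.ofReal cG)
    (F : EuclideanSpace ℝ (Fin m) → ℝ) (hFcont : Continuous F)
    (hFG : ∀ v, |F v| ≤ G v)
    (φ : EuclideanSpace ℝ (Fin d) → ℝ) (hφcont : Continuous φ)
    (hφsupp : HasCompactSupport φ) (hφQ : tsupport φ ⊆ Q) (hφnonneg : ∀ y, 0 ≤ φ y)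
    (LF LG : ℝ)
    (hLF : Tendsto (fun R : ℝ => ∫ y in Q, F (z R y) * φ y) atTop (nhds LF))
    (hLG : Tendsto (fun R : ℝ => ∫ y in Q, G (z R y) * φ y) atTop (nhds LG)) :
    Integrable (fun y => ∫ lam, G lam ∂(ν y)) (volume.restrict Q) ∧
    Integrable (fun y => ∫ lam, F lam ∂(ν y)) (volume.restrict Q) ∧
    |LF - ∫ y in Q, (∫ lam, F lam ∂(ν y)) * φ y| ≤
      LG - ∫ y in Q, (∫ lam, G lam ∂(ν y)) * φ y := by
  classical
  set μ := volume.restrict Q with hμdef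
  set fF : ℕ → C₀(EuclideanSpace ℝ (Fin m), ℝ) := fun k => mulTheta F hFcont k with hfFdef
  set fG : ℕ → C₀(EuclideanSpace ℝ (Fin m), ℝ) := fun k => mulTheta G hGcont k with hfGdef
  -- basic integrabilities wrt the probability measures
  have hC0int : ∀ (f : C₀(EuclideanSpace ℝ (Fin m), ℝ)) y, Integrable f (ν y) := by
    intro f y
    have := f.toBCF.integrable (ν y)
    exact this
  have hC0bd : ∀ (f : C₀(EuclideanSpace ℝ (Fin m), ℝ)), ∃ C, ∀ v, ‖f v‖ ≤ C :=
    fun f => ⟨‖f.toBCF‖, fun v => f.toBCF.norm_coe_le_norm v⟩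
  have hνintbd : ∀ (f : C₀(EuclideanSpace ℝ (Fin m), ℝ)), ∃ C, ∀ y,
      ‖∫ lam, f lam ∂(ν y)‖ ≤ C := by
    intro f
    obtain ⟨C, hC⟩ := hC0bd f
    refine ⟨C, fun y => ?_⟩
    have h1 : ‖∫ lam, f lam ∂(ν y)‖ ≤ ∫ lam, ‖f lam‖ ∂(ν y) := norm_integral_le_integral_norm _
    have h2 : ∫ lam, ‖f lam‖ ∂(ν y) ≤ ∫ _, C ∂(ν y) :=
      integral_mono (hC0int f y).norm (integrable_const C) hC
    have := hν y
    simpa using h1.trans h2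
  have hφint : Integrable φ μ := (hφcont.integrable_of_hasCompactSupport hφsupp).restrict
  have hφbdd : ∃ C, ∀ x, ‖φ x‖ ≤ C := hφsupp.exists_bound_of_continuous hφcont
  -- specialized generation property
  have hgenC0 : ∀ (w : EuclideanSpace ℝ (Fin d) → ℝ), Continuous w → HasCompactSupport w →
      ∀ f : C₀(EuclideanSpace ℝ (Fin m), ℝ),
      Tendsto (fun R : ℝ => ∫ y in Q, w y * f (z R y)) atTop
        (nhds (∫ y in Q, w y * ∫ lam, f lam ∂(ν y))) := by
    intro w hw hwsupp f
    have hΨ : Integrable (fun y => w y • f) μ :=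
      ((hw.integrable_of_hasCompactSupport hwsupp).restrict).smul_const f
    have := hgen (fun y => w y • f) hΨ
    simpa [ZeroAtInftyContinuousMap.smul_apply, smul_eq_mul, integral_const_mul] using this
  -- integrability of G ∘ z R on Q
  have hGzint : ∀ R, 0 < R → Integrable (fun y => G (z R y)) μ := by
    intro R hR
    have hmeas : Measurable fun y => G (z R y) := hGcont.measurable.comp (hz R hR)
    refine ⟨hmeas.aestronglyMeasurable, ?_⟩
    rw [hasFiniteIntegral_iff_ofReal (Eventually.of_forall fun y => hGnonneg _)]
    exact lt_of_le_of_lt (hGbound R hR) ENNReal.ofReal_lt_top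
  have hGzle : ∀ R, 0 < R → ∫ y in Q, G (z R y) ≤ max cG 0 := by
    intro R hR
    have hmeas : Measurable fun y => G (z R y) := hGcont.measurable.comp (hz R hR)
    rw [integral_eq_lintegral_of_nonneg_ae (Eventually.of_forall fun y => hGnonneg _)
      hmeas.aestronglyMeasurable]
    calc (∫⁻ y, ENNReal.ofReal (G (z R y)) ∂μ).toReal
        ≤ (ENNReal.ofReal cG).toReal :=
          ENNReal.toReal_mono ENNReal.ofReal_ne_top (hGbound R hR)
      _ = max cG 0 := ENNReal.toReal_ofReal'
  -- pointwise limits and sups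
  have hθone : ∀ (n : ℕ) (w : EuclideanSpace ℝ (Fin n)) (k : ℕ), ‖w‖ ≤ k → theta n k w = 1 :=
    fun n w k h => theta_eq_one n k w h
  have hFlim : ∀ v, Tendsto (fun k => F v * theta m k v) atTop (nhds (F v)) := by
    intro v
    apply tendsto_atTop_of_eventually_const (i₀ := ⌈‖v‖⌉₊)
    intro k hk
    rw [theta_eq_one m k v (le_trans (Nat.le_ceil _) (by exact_mod_cast hk)), mul_one]
  have hGlim : ∀ v, Tendsto (fun k => G v * theta m k v) atTop (nhds (G v)) := by
    intro v
    apply tendsto_atTop_of_eventually_const (i₀ := ⌈‖v‖⌉₊)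
    intro k hk
    rw [theta_eq_one m k v (le_trans (Nat.le_ceil _) (by exact_mod_cast hk)), mul_one]
  -- the lintegral of G wrt ν y
  set gtop : EuclideanSpace ℝ (Fin d) → ENNReal :=
    fun y => ∫⁻ lam, ENNReal.ofReal (G lam) ∂(ν y) with hgtopdef
  have hfGnonneg : ∀ k v, 0 ≤ fG k v := fun k v =>
    mul_nonneg (hGnonneg v) (theta_nonneg m k v)
  have hνGk_eq : ∀ k y, ∫⁻ lam, ENNReal.ofReal (fG k lam) ∂(ν y)
      = ENNReal.ofReal (∫ lam, fG k lam ∂(ν y)) := fun k y =>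
    (ofReal_integral_eq_lintegral_ofReal (hC0int (fG k) y)
      (Eventually.of_forall fun v => hfGnonneg k v)).symm
  have hgtop_eq : ∀ y, gtop y = ⨆ k, ENNReal.ofReal (∫ lam, fG k lam ∂(ν y)) := by
    intro y
    have h1 : ∀ v, ENNReal.ofReal (G v) = ⨆ k, ENNReal.ofReal (fG k v) := by
      intro v
      apply le_antisymm
      · refine le_iSup_of_le ⌈‖v‖⌉₊ ?_
        rw [show fG ⌈‖v‖⌉₊ v = G v * theta m ⌈‖v‖⌉₊ v from rfl,
          theta_eq_one m _ v (Nat.le_ceil _), mul_one]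
      · refine iSup_le fun k => ENNReal.ofReal_le_ofReal ?_
        have := theta_le_one m k v
        have := theta_nonneg m k v
        have := hGnonneg v
        show G v * theta m k v ≤ G v
        nlinarith
    have h2 : gtop y = ∫⁻ lam, ⨆ k, ENNReal.ofReal (fG k lam) ∂(ν y) := by
      rw [hgtopdef]
      exact lintegral_congr fun v => h1 v
    rw [h2, lintegral_iSup]
    · simp_rw [hνGk_eq]
    · exact fun k => ((hGcont.mul (theta_cont m k)).measurable).ennreal_ofReal
    · intro k l hkl v
      apply ENNReal.ofReal_le_ofReal
      show G v * theta m k v ≤ G v * theta m l v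
      exact mul_le_mul_of_nonneg_left (theta_mono m hkl v) (hGnonneg v)
  have hgtopmeas : Measurable gtop := by
    have : gtop = fun y => ⨆ k, ENNReal.ofReal (∫ lam, fG k lam ∂(ν y)) := funext hgtop_eq
    rw [this]
    exact Measurable.iSup fun k => (hνmeas (fG k)).ennreal_ofReal
  -- uniform bound over Q
  have key1 : ∀ j k : ℕ, ∫ y in Q, theta d j y * (∫ lam, fG k lam ∂(ν y)) ≤ max cG 0 := by
    intro j k
    have htend := hgenC0 (theta d j) (theta_cont d j) (theta_compactSupport d j) (fG k)
    refine le_of_tendsto htend ?_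
    filter_upwards [eventually_gt_atTop (0:ℝ)] with R hR
    have hint1 : Integrable (fun y => theta d j y * fG k (z R y)) μ := by
      refine (hGzint R hR).mono ?_ (Eventually.of_forall fun y => ?_)
      · exact ((theta_cont d j).measurable.mul
          (((fG k).continuous).measurable.comp (hz R hR))).aestronglyMeasurable
      · rw [Real.norm_eq_abs, Real.norm_eq_abs, abs_of_nonneg (hGnonneg (z R y)),
          abs_of_nonneg (mul_nonneg (theta_nonneg d j y) (hfGnonneg k (z R y)))]
        exact prod_le_of_le_one _ _ _ (theta_nonneg d j y) (theta_le_one d j y)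
          (theta_nonneg m k (z R y)) (theta_le_one m k (z R y)) (hGnonneg (z R y))
    calc ∫ y in Q, theta d j y * fG k (z R y)
        ≤ ∫ y in Q, G (z R y) := by
          refine integral_mono hint1 (hGzint R hR) fun y => ?_
          exact prod_le_of_le_one _ _ _ (theta_nonneg d j y) (theta_le_one d j y)
            (theta_nonneg m k (z R y)) (theta_le_one m k (z R y)) (hGnonneg (z R y))
      _ ≤ max cG 0 := hGzle R hR
  have hνGknonneg : ∀ k y, 0 ≤ ∫ lam, fG k lam ∂(ν y) := fun k y =>
    integral_nonneg fun v => hfGnonneg k v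
  have key2 : ∀ k : ℕ, ∫⁻ y in Q, ENNReal.ofReal (∫ lam, fG k lam ∂(ν y))
      ≤ ENNReal.ofReal (max cG 0) := by
    intro k
    have hmeasg : ∀ j : ℕ, Measurable (fun y =>
        ENNReal.ofReal (theta d j y * ∫ lam, fG k lam ∂(ν y))) := fun j =>
      ((theta_cont d j).measurable.mul (hνmeas (fG k))).ennreal_ofReal
    have hsup : ∀ y, (⨆ j, ENNReal.ofReal (theta d j y * ∫ lam, fG k lam ∂(ν y)))
        = ENNReal.ofReal (∫ lam, fG k lam ∂(ν y)) := by
      intro y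
      apply le_antisymm
      · refine iSup_le fun j => ENNReal.ofReal_le_ofReal ?_
        have h1 := theta_le_one d j y
        have h2 := theta_nonneg d j y
        have h5 := hνGknonneg k y
        nlinarith
      · refine le_iSup_of_le ⌈‖y‖⌉₊ ?_
        rw [theta_eq_one d _ y (Nat.le_ceil _), one_mul]
    have hmono : Monotone (fun (j : ℕ) y =>
        ENNReal.ofReal (theta d j y * ∫ lam, fG k lam ∂(ν y))) := by
      intro j l hjl
      intro y
      exact ENNReal.ofReal_le_ofReal
        (mul_le_mul_of_nonneg_right (theta_mono d hjl y) (hνGknonneg k y))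
    calc ∫⁻ y in Q, ENNReal.ofReal (∫ lam, fG k lam ∂(ν y))
        = ∫⁻ y in Q, ⨆ j, ENNReal.ofReal (theta d j y * ∫ lam, fG k lam ∂(ν y)) :=
          lintegral_congr fun y => (hsup y).symm
      _ = ⨆ j, ∫⁻ y in Q, ENNReal.ofReal (theta d j y * ∫ lam, fG k lam ∂(ν y)) :=
          lintegral_iSup hmeasg hmono
      _ ≤ ENNReal.ofReal (max cG 0) := by
          refine iSup_le fun j => ?_
          have hintθ : Integrable (theta d j) μ :=
            ((theta_cont d j).integrable_of_hasCompactSupport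
              (theta_compactSupport d j)).restrict
          obtain ⟨C, hC⟩ := hνintbd (fG k)
          have hint2 : Integrable (fun y => theta d j y * ∫ lam, fG k lam ∂(ν y)) μ := by
            have := hintθ.bdd_mul (hνmeas (fG k)).aestronglyMeasurable (Eventually.of_forall fun y => hC y)
            exact this |> integrable_mul_comm
          rw [← ofReal_integral_eq_lintegral_ofReal hint2
            (Eventually.of_forall fun y =>
              mul_nonneg (theta_nonneg d j y) (hνGknonneg k y))]
          exact ENNReal.ofReal_le_ofReal (key1 j k)
  have key3 : ∫⁻ y in Q, gtop y ≤ ENNReal.ofReal (max cG 0) := by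
    have hmono : Monotone (fun (k : ℕ) y => ENNReal.ofReal (∫ lam, fG k lam ∂(ν y))) := by
      intro k l hkl y
      apply ENNReal.ofReal_le_ofReal
      refine integral_mono (hC0int (fG k) y) (hC0int (fG l) y) fun v => ?_
      show G v * theta m k v ≤ G v * theta m l v
      exact mul_le_mul_of_nonneg_left (theta_mono m hkl v) (hGnonneg v)
    calc ∫⁻ y in Q, gtop y
        = ∫⁻ y in Q, ⨆ k, ENNReal.ofReal (∫ lam, fG k lam ∂(ν y)) :=
          lintegral_congr fun y => hgtop_eq y
      _ = ⨆ k, ∫⁻ y in Q, ENNReal.ofReal (∫ lam, fG k lam ∂(ν y)) :=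
          lintegral_iSup (fun k => (hνmeas (fG k)).ennreal_ofReal) hmono
      _ ≤ ENNReal.ofReal (max cG 0) := iSup_le key2
  have hfin : ∀ᵐ y ∂μ, gtop y < ⊤ :=
    ae_lt_top hgtopmeas (lt_of_le_of_lt key3 ENNReal.ofReal_lt_top).ne
  have hGνint : ∀ᵐ y ∂μ, Integrable G (ν y) := by
    filter_upwards [hfin] with y hy
    refine ⟨hGcont.measurable.aestronglyMeasurable, ?_⟩
    rw [hasFiniteIntegral_iff_ofReal (Eventually.of_forall hGnonneg)]
    exact hy
  have hνGeq : ∀ y, (∫ lam, G lam ∂(ν y)) = (gtop y).toReal := fun y =>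
    integral_eq_lintegral_of_nonneg_ae (Eventually.of_forall hGnonneg)
      hGcont.measurable.aestronglyMeasurable
  -- (1) integrability of ⟨ν, G⟩
  have hνGint : Integrable (fun y => ∫ lam, G lam ∂(ν y)) μ := by
    have heq : (fun y => ∫ lam, G lam ∂(ν y)) = fun y => (gtop y).toReal := funext hνGeq
    rw [heq]
    refine ⟨(hgtopmeas.ennreal_toReal).aestronglyMeasurable, ?_⟩
    rw [hasFiniteIntegral_iff_ofReal (Eventually.of_forall fun y => ENNReal.toReal_nonneg)]
    calc ∫⁻ y, ENNReal.ofReal (gtop y).toReal ∂μ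
        ≤ ∫⁻ y, gtop y ∂μ := lintegral_mono fun y => ENNReal.ofReal_toReal_le
      _ < ⊤ := lt_of_le_of_lt key3 ENNReal.ofReal_lt_top
  have hνGnonneg : ∀ y, 0 ≤ ∫ lam, G lam ∂(ν y) := fun y => integral_nonneg hGnonneg
  -- F side
  have hFνint : ∀ᵐ y ∂μ, Integrable F (ν y) := by
    filter_upwards [hGνint] with y hy
    refine hy.mono hFcont.measurable.aestronglyMeasurable
      (Eventually.of_forall fun v => ?_)
    rw [Real.norm_eq_abs, Real.norm_eq_abs, abs_of_nonneg (hGnonneg v)]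
    exact hFG v
  have hνFbd : ∀ᵐ y ∂μ, |∫ lam, F lam ∂(ν y)| ≤ ∫ lam, G lam ∂(ν y) := by
    filter_upwards [hGνint, hFνint] with y hyG hyF
    calc |∫ lam, F lam ∂(ν y)| ≤ ∫ lam, |F lam| ∂(ν y) := by
          simpa [Real.norm_eq_abs] using norm_integral_le_integral_norm (μ := ν y) F
      _ ≤ ∫ lam, G lam ∂(ν y) := integral_mono hyF.abs hyG hFG
  have hνFtend : ∀ᵐ y ∂μ, Tendsto (fun k => ∫ lam, fF k lam ∂(ν y)) atTop
      (nhds (∫ lam, F lam ∂(ν y))) := by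
    filter_upwards [hGνint] with y hy
    refine tendsto_integral_of_dominated_convergence G
      (fun k => ((fF k).continuous).measurable.aestronglyMeasurable) hy
      (fun k => Eventually.of_forall fun v => ?_) (Eventually.of_forall fun v => hFlim v)
    rw [Real.norm_eq_abs]
    show |F v * theta m k v| ≤ G v
    rw [abs_mul, abs_of_nonneg (theta_nonneg m k v)]
    have h1 := hFG v
    have h2 := theta_le_one m k v
    have h3 := theta_nonneg m k v
    have h4 := abs_nonneg (F v)
    nlinarith
  have hνGtend : ∀ᵐ y ∂μ, Tendsto (fun k => ∫ lam, fG k lam ∂(ν y)) atTop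
      (nhds (∫ lam, G lam ∂(ν y))) := by
    filter_upwards [hGνint] with y hy
    refine tendsto_integral_of_dominated_convergence G
      (fun k => ((fG k).continuous).measurable.aestronglyMeasurable) hy
      (fun k => Eventually.of_forall fun v => ?_) (Eventually.of_forall fun v => hGlim v)
    rw [Real.norm_eq_abs]
    show |G v * theta m k v| ≤ G v
    rw [abs_mul, abs_of_nonneg (theta_nonneg m k v), abs_of_nonneg (hGnonneg v)]
    have h2 := theta_le_one m k v
    have h3 := theta_nonneg m k v
    have h5 := hGnonneg v
    nlinarith
  have hνFmeas : AEMeasurable (fun y => ∫ lam, F lam ∂(ν y)) μ :=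
    aemeasurable_of_tendsto_metrizable_ae atTop
      (fun k => (hνmeas (fF k)).aemeasurable) hνFtend
  -- (2) integrability of ⟨ν, F⟩
  have hνFint : Integrable (fun y => ∫ lam, F lam ∂(ν y)) μ := by
    refine hνGint.mono' hνFmeas.aestronglyMeasurable ?_
    filter_upwards [hνFbd] with y hy
    rwa [Real.norm_eq_abs]
  -- key inequality for each k
  have hνFkbd : ∀ᵐ y ∂μ, ∀ k, |∫ lam, fF k lam ∂(ν y)| ≤ ∫ lam, G lam ∂(ν y) := by
    filter_upwards [hGνint] with y hy
    intro k
    calc |∫ lam, fF k lam ∂(ν y)| ≤ ∫ lam, |fF k lam| ∂(ν y) := by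
          simpa [Real.norm_eq_abs] using norm_integral_le_integral_norm (μ := ν y) (fF k)
      _ ≤ ∫ lam, G lam ∂(ν y) := by
          refine integral_mono (hC0int (fF k) y).abs hy fun v => ?_
          show |F v * theta m k v| ≤ G v
          rw [abs_mul, abs_of_nonneg (theta_nonneg m k v)]
          have h1 := hFG v
          have h2 := theta_le_one m k v
          have h3 := theta_nonneg m k v
          have h4 := abs_nonneg (F v)
          nlinarith
  have hνGkbd : ∀ᵐ y ∂μ, ∀ k, |∫ lam, fG k lam ∂(ν y)| ≤ ∫ lam, G lam ∂(ν y) := by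
    filter_upwards [hGνint] with y hy
    intro k
    rw [abs_of_nonneg (hνGknonneg k y)]
    refine integral_mono (hC0int (fG k) y) hy fun v => ?_
    show G v * theta m k v ≤ G v
    have h2 := theta_le_one m k v
    have h3 := theta_nonneg m k v
    have h5 := hGnonneg v
    nlinarith
  have keyk : ∀ k : ℕ,
      |LF - ∫ y in Q, φ y * (∫ lam, fF k lam ∂(ν y))|
      ≤ LG - ∫ y in Q, φ y * (∫ lam, fG k lam ∂(ν y)) := by
    intro k
    have tF := hgenC0 φ hφcont hφsupp (fF k)
    have tG := hgenC0 φ hφcont hφsupp (fG k)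
    refine le_of_tendsto_of_tendsto ((hLF.sub tF).abs) (hLG.sub tG) ?_
    filter_upwards [eventually_gt_atTop (0:ℝ)] with R hR
    have hmeasz := hz R hR
    have hGz := hGzint R hR
    have hGφ : Integrable (fun y => G (z R y) * φ y) μ := by
      have := hGz.bdd_mul hφcont.measurable.aestronglyMeasurable (Eventually.of_forall hφbdd.choose_spec)
      exact this |> integrable_mul_comm
    have hFφ : Integrable (fun y => F (z R y) * φ y) μ := by
      refine hGφ.mono ((hFcont.measurable.comp hmeasz).mul
        hφcont.measurable).aestronglyMeasurable (Eventually.of_forall fun y => ?_)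
      rw [Real.norm_eq_abs, Real.norm_eq_abs, abs_mul, abs_mul,
        abs_of_nonneg (hφnonneg y), abs_of_nonneg (hGnonneg _)]
      exact mul_le_mul_of_nonneg_right (hFG _) (hφnonneg y)
    have hφfF : Integrable (fun y => φ y * fF k (z R y)) μ := by
      obtain ⟨C, hC⟩ := hC0bd (fF k)
      have := hφint.bdd_mul (((fF k).continuous).measurable.comp hmeasz).aestronglyMeasurable
        (Eventually.of_forall fun y => hC (z R y))
      exact this |> integrable_mul_comm
    have hφfG : Integrable (fun y => φ y * fG k (z R y)) μ := by
      obtain ⟨C, hC⟩ := hC0bd (fG k)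
      have := hφint.bdd_mul (((fG k).continuous).measurable.comp hmeasz).aestronglyMeasurable
        (Eventually.of_forall fun y => hC (z R y))
      exact this |> integrable_mul_comm
    show |(∫ y in Q, F (z R y) * φ y) - ∫ y in Q, φ y * fF k (z R y)|
      ≤ (∫ y in Q, G (z R y) * φ y) - ∫ y in Q, φ y * fG k (z R y)
    rw [← integral_sub hFφ hφfF, ← integral_sub hGφ hφfG]
    calc |∫ y in Q, (F (z R y) * φ y - φ y * fF k (z R y))|
        ≤ ∫ y in Q, |F (z R y) * φ y - φ y * fF k (z R y)| := by
          simpa [Real.norm_eq_abs] using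
            norm_integral_le_integral_norm (μ := μ)
              (fun y => F (z R y) * φ y - φ y * fF k (z R y))
      _ ≤ ∫ y in Q, (G (z R y) * φ y - φ y * fG k (z R y)) := by
          refine integral_mono (hFφ.sub hφfF).abs (hGφ.sub hφfG) fun y => ?_
          exact abs_key (F (z R y)) (G (z R y)) (theta m k (z R y)) (φ y)
            (hFG _) (theta_nonneg m k _) (theta_le_one m k _) (hφnonneg y)
  -- limits in k
  obtain ⟨Cφ, hCφ⟩ := hφbdd
  have hboundint : Integrable (fun y => φ y * ∫ lam, G lam ∂(ν y)) μ := by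
    have := hνGint.bdd_mul hφcont.measurable.aestronglyMeasurable (Eventually.of_forall hCφ)
    exact this
  have tAF : Tendsto (fun k => ∫ y in Q, φ y * (∫ lam, fF k lam ∂(ν y))) atTop
      (nhds (∫ y in Q, φ y * (∫ lam, F lam ∂(ν y)))) := by
    refine tendsto_integral_of_dominated_convergence
      (fun y => φ y * ∫ lam, G lam ∂(ν y))
      (fun k => (hφcont.measurable.mul (hνmeas (fF k))).aestronglyMeasurable)
      hboundint ?_ ?_
    · intro k
      filter_upwards [hνFkbd] with y hy
      rw [Real.norm_eq_abs, abs_mul, abs_of_nonneg (hφnonneg y)]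
      exact mul_le_mul_of_nonneg_left (hy k) (hφnonneg y)
    · filter_upwards [hνFtend] with y hy
      exact hy.const_mul (φ y)
  have tAG : Tendsto (fun k => ∫ y in Q, φ y * (∫ lam, fG k lam ∂(ν y))) atTop
      (nhds (∫ y in Q, φ y * (∫ lam, G lam ∂(ν y)))) := by
    refine tendsto_integral_of_dominated_convergence
      (fun y => φ y * ∫ lam, G lam ∂(ν y))
      (fun k => (hφcont.measurable.mul (hνmeas (fG k))).aestronglyMeasurable)
      hboundint ?_ ?_
    · intro k
      filter_upwards [hνGkbd] with y hy
      rw [Real.norm_eq_abs, abs_mul, abs_of_nonneg (hφnonneg y)]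
      exact mul_le_mul_of_nonneg_left (hy k) (hφnonneg y)
    · filter_upwards [hνGtend] with y hy
      exact hy.const_mul (φ y)
  have hfinal : |LF - ∫ y in Q, φ y * (∫ lam, F lam ∂(ν y))|
      ≤ LG - ∫ y in Q, φ y * (∫ lam, G lam ∂(ν y)) := by
    refine le_of_tendsto_of_tendsto ((tendsto_const_nhds.sub tAF).abs)
      (tendsto_const_nhds.sub tAG) (Eventually.of_forall keyk)
  refine ⟨hνGint, hνFint, ?_⟩
  have hcommF : ∫ y in Q, (∫ lam, F lam ∂(ν y)) * φ y
      = ∫ y in Q, φ y * (∫ lam, F lam ∂(ν y)) :=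
    integral_congr_ae (Eventually.of_forall fun y => mul_comm _ _)
  have hcommG : ∫ y in Q, (∫ lam, G lam ∂(ν y)) * φ y
      = ∫ y in Q, φ y * (∫ lam, G lam ∂(ν y)) :=
    integral_congr_ae (Eventually.of_forall fun y => mul_comm _ _)
  rw [hcommF, hcommG]
  exact hfinal
end
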